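/- Let M ∈ 𝒫 be a mean partition of the sample (X_1,…,X_n) of partitions. Then every representative B ∈ 𝒳 of M is of the form B = (1/n)·Σ_{i=1}^n A_i, where each A_i ∈ 𝒳 is a representative of X_i in optimal position with B, i.e., δ(X_i, M) = ‖A_i − B‖. -/

import Mathlib

open scoped BigOperators
open MeasureTheory

noncomputable section

/-- Matrices as points of the Euclidean space `ℝ^{ℓ×m}` with the Frobenius norm. -/
abbrev Mat (l m : ℕ) := EuclideanSpace ℝ (Fin l × Fin m)

/-- `A` is a representation matrix: entries in `[0,1]` and each column sums to `1`. -/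
def IsRep {l m : ℕ} (A : Mat l m) : Prop :=
  (∀ p, 0 ≤ A p ∧ A p ≤ 1) ∧ ∀ j : Fin m, ∑ k : Fin l, A (k, j) = 1

/-- The representation space `𝒳`. -/
abbrev RepSpace (l m : ℕ) := {A : Mat l m // IsRep A}

/-- Action of a permutation on a matrix by permuting rows. -/
def permAct {l m : ℕ} (σ : Equiv.Perm (Fin l)) (A : Mat l m) : Mat l m :=
  WithLp.toLp 2 (fun p => A (σ⁻¹ p.1, p.2))

lemma isRep_permAct {l m : ℕ} (σ : Equiv.Perm (Fin l)) {A : Mat l m} (hA : IsRep A) :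
    IsRep (permAct σ A) := by
  refine ⟨fun p => hA.1 _, fun j => ?_⟩
  have h := Equiv.sum_comp σ⁻¹ (fun k => A (k, j))
  simpa [permAct] using h.trans (hA.2 j)

instance {l m : ℕ} : SMul (Equiv.Perm (Fin l)) (RepSpace l m) :=
  ⟨fun σ A => ⟨permAct σ A.1, isRep_permAct σ A.2⟩⟩

lemma smul_rep_def {l m : ℕ} (σ : Equiv.Perm (Fin l)) (A : RepSpace l m) :
    (σ • A).1 = permAct σ A.1 := rfl

instance {l m : ℕ} : MulAction (Equiv.Perm (Fin l)) (RepSpace l m) where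
  one_smul A := Subtype.ext rfl
  mul_smul σ τ A := Subtype.ext rfl

/-- Two representation matrices are equivalent iff they lie in the same `Π`-orbit. -/
instance pSetoid (l m : ℕ) : Setoid (RepSpace l m) :=
  MulAction.orbitRel (Equiv.Perm (Fin l)) (RepSpace l m)

/-- The partition space `𝒫 = 𝒳/Π`. -/
abbrev PSpace (l m : ℕ) := Quotient (pSetoid l m)

/-- The intrinsic metric `δ` on `𝒫`: the minimal Euclidean distance between representatives. -/
def pdist {l m : ℕ} (X Y : PSpace l m) : ℝ :=
  sInf {d | ∃ A B : RepSpace l m, ⟦A⟧ = X ∧ ⟦B⟧ = Y ∧ d = dist A B}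

/-- The degree of asymmetry `α` of the partition represented by `A`:
`min {‖A - σ·A‖ : σ ≠ id}`. -/
def alpha {l m : ℕ} (A : RepSpace l m) : ℝ :=
  sInf {d | ∃ σ : Equiv.Perm (Fin l), σ ≠ 1 ∧ d = dist A (σ • A)}

/-- The closed ball in the partition space. -/
def pBall {l m : ℕ} (Z : PSpace l m) (r : ℝ) : Set (PSpace l m) :=
  {X | pdist X Z ≤ r}

/-- The metric topology on `𝒫` generated by the open balls of `δ`. -/
instance {l m : ℕ} : TopologicalSpace (PSpace l m) :=
  TopologicalSpace.generateFrom {s | ∃ (Z : PSpace l m) (r : ℝ), s = {X | pdist X Z < r}}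

instance {l m : ℕ} : MeasurableSpace (PSpace l m) := borel _

/-- `B(Z, r)` is a homogeneous ball: there is a bijective isometry onto the closed ball of
radius `r` in `𝒳` centered at a representative of `Z`. -/
def IsHomBall {l m : ℕ} (Z : PSpace l m) (r : ℝ) : Prop :=
  ∃ A : RepSpace l m, ⟦A⟧ = Z ∧
    ∃ φ : pBall Z r → {B : RepSpace l m | dist B A ≤ r},
      Function.Bijective φ ∧
        ∀ X Y : pBall Z r,
          dist (φ X : RepSpace l m) (φ Y : RepSpace l m) =
            pdist (X : PSpace l m) (Y : PSpace l m)

/-- The `k`-th row of a representation matrix, as a point of Euclidean space `ℝ^m`. -/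
def rowOf {l m : ℕ} (A : RepSpace l m) (k : Fin l) : EuclideanSpace ℝ (Fin m) :=
  WithLp.toLp 2 (fun j => A.1 (k, j))

/-- The support of a measure: the smallest closed set of full measure. -/
def msupport {l m : ℕ} (Q : Measure (PSpace l m)) : Set (PSpace l m) :=
  ⋂₀ {S | IsClosed S ∧ Q S = 1}

/-- The Dirichlet fundamental domain centered at `A`. -/
def DirDom {l m : ℕ} (A : RepSpace l m) : Set (RepSpace l m) :=
  {B | ∀ σ : Equiv.Perm (Fin l), dist B A ≤ dist B (σ • A)}

lemma dist_smul_smul' {l m : ℕ} (σ : Equiv.Perm (Fin l)) (A B : RepSpace l m) :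
    dist (σ • A) (σ • B) = dist A B := by
  rw [Subtype.dist_eq, Subtype.dist_eq, EuclideanSpace.dist_eq, EuclideanSpace.dist_eq]
  congr 1
  have := Equiv.sum_comp (Equiv.prodCongr σ⁻¹ (Equiv.refl (Fin m)))
    (fun p : Fin l × Fin m => dist (A.1 p) (B.1 p) ^ 2)
  simp only [smul_rep_def, permAct]
  exact this

lemma quot_smul {l m : ℕ} (σ : Equiv.Perm (Fin l)) (A : RepSpace l m) :
    (⟦σ • A⟧ : PSpace l m) = ⟦A⟧ :=
  Quotient.sound ⟨σ, rfl⟩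

lemma pdist_le {l m : ℕ} (A B : RepSpace l m) : pdist ⟦A⟧ ⟦B⟧ ≤ dist A B := by
  apply csInf_le
  · exact ⟨0, fun d ⟨A', B', _, _, hd⟩ => hd ▸ dist_nonneg⟩
  · exact ⟨A, B, rfl, rfl, rfl⟩

lemma pdist_set_eq {l m : ℕ} (A0 B : RepSpace l m) :
    {d | ∃ A B' : RepSpace l m, ⟦A⟧ = (⟦A0⟧ : PSpace l m) ∧ ⟦B'⟧ = (⟦B⟧ : PSpace l m)
      ∧ d = dist A B'}
      = Set.range (fun σ : Equiv.Perm (Fin l) => dist (σ • A0) B) := by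
  ext d
  constructor
  · rintro ⟨A, B', hA, hB', rfl⟩
    obtain ⟨τ, hτ⟩ := Quotient.exact hB'
    obtain ⟨ρ, hρ⟩ := Quotient.exact hA
    refine ⟨τ⁻¹ * ρ, ?_⟩
    have hρ' : ρ • A0 = A := hρ
    have hτ' : B = τ⁻¹ • B' := by rw [← hτ]; exact (inv_smul_smul τ B).symm
    show dist ((τ⁻¹ * ρ) • A0) B = dist A B'
    rw [mul_smul, hρ', hτ', dist_smul_smul']
  · rintro ⟨σ, rfl⟩
    exact ⟨σ • A0, B, quot_smul σ A0, rfl, rfl⟩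

lemma pdist_exists_opt {l m : ℕ} (A0 B : RepSpace l m) :
    ∃ σ : Equiv.Perm (Fin l), pdist ⟦A0⟧ ⟦B⟧ = dist (σ • A0) B := by
  have hfin : (Set.range (fun σ : Equiv.Perm (Fin l) => dist (σ • A0) B)).Finite :=
    Set.finite_range _
  have hne : (Set.range (fun σ : Equiv.Perm (Fin l) => dist (σ • A0) B)).Nonempty :=
    Set.range_nonempty _
  have := hne.csInf_mem hfin
  obtain ⟨σ, hσ⟩ := this
  exact ⟨σ, by rw [pdist, pdist_set_eq A0 B, ← hσ]⟩

lemma pdist_nonneg' {l m : ℕ} (X Y : PSpace l m) : 0 ≤ pdist X Y := by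
  obtain ⟨A, rfl⟩ := Quotient.exists_rep X
  obtain ⟨B, rfl⟩ := Quotient.exists_rep Y
  refine le_csInf ⟨dist A B, A, B, rfl, rfl, rfl⟩ ?_
  rintro d ⟨A', B', _, _, rfl⟩
  exact dist_nonneg

/-- The mean minimizes the sum of squared distances: the variance decomposition. -/
lemma mean_identity {n : ℕ} {E : Type*} [NormedAddCommGroup E] [InnerProductSpace ℝ E]
    (a : Fin n → E) (b : E) (c : E) (hc : (n : ℝ) • c = ∑ i, a i) :
    ∑ i, ‖a i - b‖ ^ 2 = ∑ i, ‖a i - c‖ ^ 2 + (n : ℝ) * ‖c - b‖ ^ 2 := by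
  have h : ∀ i, ‖a i - b‖ ^ 2
      = ‖a i - c‖ ^ 2 + 2 * inner ℝ (a i - c) (c - b) + ‖c - b‖ ^ 2 := by
    intro i
    have : a i - b = (a i - c) + (c - b) := by abel
    rw [this, @norm_add_sq_real]
  simp_rw [h]
  rw [Finset.sum_add_distrib, Finset.sum_add_distrib]
  have hcross : ∑ i : Fin n, 2 * inner ℝ (a i - c) (c - b) = (0 : ℝ) := by
    rw [← Finset.mul_sum, ← sum_inner]
    have : ∑ i : Fin n, (a i - c) = (0 : E) := by
      rw [Finset.sum_sub_distrib, ← hc, sub_eq_zero, Finset.sum_const, Finset.card_univ,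
        Fintype.card_fin, Nat.cast_smul_eq_nsmul]
    rw [this, inner_zero_left, mul_zero]
  rw [hcross, add_zero]
  simp [Finset.sum_const, nsmul_eq_mul, mul_comm]

theorem stmt13 {l m n : ℕ} (hl : 1 ≤ l) (hm : 1 ≤ m) (hn : 1 ≤ n)
    (X : Fin n → PSpace l m) (M : PSpace l m)
    (hM : ∀ W : PSpace l m,
      (1 / (n : ℝ)) * ∑ i, pdist (X i) M ^ 2 ≤ (1 / (n : ℝ)) * ∑ i, pdist (X i) W ^ 2)
    (B : RepSpace l m) (hB : (⟦B⟧ : PSpace l m) = M) :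
    ∃ A : Fin n → RepSpace l m,
      (∀ i, (⟦A i⟧ : PSpace l m) = X i) ∧
      (∀ i, pdist (X i) M = dist (A i) B) ∧
      B.1 = (1 / (n : ℝ)) • ∑ i, (A i).1 := by
  have hnpos : (0 : ℝ) < n := by exact_mod_cast hn
  -- choose optimal representatives
  have hrep : ∀ i, ∃ Ai : RepSpace l m, ⟦Ai⟧ = X i ∧ pdist (X i) M = dist Ai B := by
    intro i
    obtain ⟨A0, hA0⟩ := Quotient.exists_rep (X i)
    obtain ⟨σ, hσ⟩ := pdist_exists_opt A0 B
    exact ⟨σ • A0, by rw [quot_smul, hA0], by rw [← hA0, ← hB, hσ]⟩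
  choose A hA hAd using hrep
  refine ⟨A, hA, hAd, ?_⟩
  set Cmat : Mat l m := (1 / (n : ℝ)) • ∑ i, (A i).1 with hCmat
  have hCapp : ∀ p, Cmat p = (1 / (n : ℝ)) * ∑ i, (A i).1 p := by
    intro p
    rw [hCmat, PiLp.smul_apply, smul_eq_mul]
    congr 1
    exact map_sum (PiLp.proj 2 (𝕜 := ℝ) (fun _ : Fin l × Fin m => ℝ) p) _ _
  have hCrep : IsRep Cmat := by
    refine ⟨fun p => ⟨?_, ?_⟩, fun j => ?_⟩
    · rw [hCapp]
      have : 0 ≤ ∑ i, (A i).1 p :=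
        Finset.sum_nonneg fun i _ => ((A i).2.1 p).1
      positivity
    · rw [hCapp]
      have h1 : ∑ i, (A i).1 p ≤ ∑ _i : Fin n, (1 : ℝ) :=
        Finset.sum_le_sum fun i _ => ((A i).2.1 p).2
      have h2 : (∑ _i : Fin n, (1 : ℝ)) = n := by simp
      rw [div_mul_eq_mul_div, one_mul, div_le_one hnpos]
      exact h1.trans (le_of_eq h2)
    · simp_rw [hCapp]
      rw [← Finset.mul_sum, Finset.sum_comm]
      have : ∀ i ∈ Finset.univ, ∑ k : Fin l, (A i).1 (k, j) = 1 :=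
        fun i _ => (A i).2.2 j
      rw [Finset.sum_congr rfl this]
      simp
      field_simp
  set C : RepSpace l m := ⟨Cmat, hCrep⟩ with hC
  have hnc : (n : ℝ) • Cmat = ∑ i, (A i).1 := by
    rw [hCmat, smul_smul]
    rw [mul_one_div, div_self (ne_of_gt hnpos), one_smul]
  have hid := mean_identity (fun i => (A i).1) B.1 Cmat hnc
  -- the inequalities
  have hle1 : ∑ i, pdist (X i) ⟦C⟧ ^ 2 ≤ ∑ i, ‖(A i).1 - Cmat‖ ^ 2 := by
    refine Finset.sum_le_sum fun i _ => ?_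
    have h1 : pdist (X i) ⟦C⟧ ≤ dist (A i) C := by
      rw [← hA i]; exact pdist_le (A i) C
    have h2 : dist (A i) C = ‖(A i).1 - Cmat‖ := by
      rw [Subtype.dist_eq, dist_eq_norm]
    rw [← h2]
    exact pow_le_pow_left₀ (pdist_nonneg' _ _) h1 2
  have hle2 : ∑ i, pdist (X i) M ^ 2 ≤ ∑ i, pdist (X i) ⟦C⟧ ^ 2 := by
    have := hM ⟦C⟧
    have hpos : (0 : ℝ) < 1 / n := by positivity
    exact le_of_mul_le_mul_left this hpos
  have heqB : ∑ i, pdist (X i) M ^ 2 = ∑ i, ‖(A i).1 - B.1‖ ^ 2 := by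
    refine Finset.sum_congr rfl fun i _ => ?_
    rw [hAd i, Subtype.dist_eq, dist_eq_norm]
  have key : ∑ i, ‖(A i).1 - B.1‖ ^ 2 ≤ ∑ i, ‖(A i).1 - Cmat‖ ^ 2 := by
    rw [← heqB]; exact hle2.trans hle1
  have hzero : (n : ℝ) * ‖Cmat - B.1‖ ^ 2 ≤ 0 := by linarith [hid, key]
  have hnorm : ‖Cmat - B.1‖ ^ 2 ≤ 0 := by
    by_contra h
    push_neg at h
    nlinarith
  have : Cmat - B.1 = 0 := by
    have : ‖Cmat - B.1‖ ^ 2 = 0 := le_antisymm hnorm (by positivity)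
    have h2 : ‖Cmat - B.1‖ = 0 := by nlinarith [norm_nonneg (Cmat - B.1)]
    exact norm_eq_zero.mp h2
  have : B.1 = Cmat := by
    have := sub_eq_zero.mp this
    exact this.symm
  exact this

end
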